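/- Under the same setup, let s ∈ S_{ij} (i ≠ j) be non-regular with valency p. Then σ_s σ_{s*} = p·σ_{1_{Ω_i}} + Σ_{u ∈ S_i \ O_θ(S_i)} σ_u. In particular the complex product ss* equals {1_{Ω_i}} ∪ (S_i \ O_θ(S_i)). -/

import Mathlib

open Finset
open scoped Classical

/-- A coherent configuration on a finite set `Ω`: a partition `S` of `Ω × Ω` into nonempty
relations such that the diagonal is a union of relations, `S` is closed under transposition,
and the intersection numbers `c r s u` are well defined. -/
structure CoherentConfig (Ω : Type) [Fintype Ω] [DecidableEq Ω] where
  S : Finset (Finset (Ω × Ω))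
  nonempty_mem : ∀ s ∈ S, s.Nonempty
  partition : ∀ x : Ω × Ω, ∃! s, s ∈ S ∧ x ∈ s
  diag_union : ∀ s ∈ S, (∃ x ∈ s, x.1 = x.2) → ∀ y ∈ s, y.1 = y.2
  symm_mem : ∀ s ∈ S, s.image Prod.swap ∈ S
  c : Finset (Ω × Ω) → Finset (Ω × Ω) → Finset (Ω × Ω) → ℕ
  c_spec : ∀ r ∈ S, ∀ s ∈ S, ∀ u ∈ S, ∀ x ∈ u,
    (Finset.univ.filter (fun γ : Ω => (x.1, γ) ∈ r ∧ (γ, x.2) ∈ s)).card = c r s u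

variable {Ω : Type} [Fintype Ω] [DecidableEq Ω]

/-- The diagonal relation of a subset `Δ ⊆ Ω`. -/
def diagRel (Δ : Finset Ω) : Finset (Ω × Ω) := Δ.image (fun d => (d, d))

/-- `Δ` is a fiber of the coherent configuration if its diagonal is a basis relation. -/
def IsFiber (A : CoherentConfig Ω) (Δ : Finset Ω) : Prop := diagRel Δ ∈ A.S

/-- The transpose of a relation. -/
def star (s : Finset (Ω × Ω)) : Finset (Ω × Ω) := s.image Prod.swap

/-- Every point in the domain of `s` has exactly `n` out-neighbours along `s`. -/
def HasValency (s : Finset (Ω × Ω)) (n : ℕ) : Prop :=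
  ∀ x ∈ s, (Finset.univ.filter fun γ : Ω => (x.1, γ) ∈ s).card = n

/-- `s` is a thin basis relation of the fiber scheme on `Δ`. -/
def IsThinOn (A : CoherentConfig Ω) (Δ : Finset Ω) (s : Finset (Ω × Ω)) : Prop :=
  s ∈ A.S ∧ s ⊆ Δ ×ˢ Δ ∧ HasValency s 1

/-- The complex product of two sets of basis relations. -/
def cprod (A : CoherentConfig Ω) (T U : Finset (Finset (Ω × Ω))) : Finset (Finset (Ω × Ω)) :=
  A.S.filter fun u => ∃ t ∈ T, ∃ v ∈ U, A.c t v u ≠ 0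

/-- `s` is a regular relation: `s s* s = {s}` as a complex product. -/
def Regular (A : CoherentConfig Ω) (s : Finset (Ω × Ω)) : Prop :=
  cprod A (cprod A {s} {star s}) {s} = {s}

/-- The fiber scheme on `Δ` is isomorphic to the wreath product `C_p ≀ C_p`:
it has degree `p²`, exactly `p` thin relations forming a closed subset,
and all other basis relations have valency `p`. -/
def WreathFiber (p : ℕ) (A : CoherentConfig Ω) (Δ : Finset Ω) : Prop :=
  IsFiber A Δ ∧ Δ.card = p ^ 2 ∧
  (A.S.filter fun s => IsThinOn A Δ s).card = p ∧
  (∀ s ∈ A.S, s ⊆ Δ ×ˢ Δ → HasValency s 1 ∨ HasValency s p) ∧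
  (∀ s t u : Finset (Ω × Ω), IsThinOn A Δ s → IsThinOn A Δ t → u ∈ A.S →
    A.c s (star t) u ≠ 0 → IsThinOn A Δ u)

/-- The adjacency matrix of a relation. -/
def adjM (s : Finset (Ω × Ω)) : Matrix Ω Ω ℂ := fun α β => if (α, β) ∈ s then 1 else 0


set_option linter.unusedSectionVars false
section Aux

variable {Ω : Type} [Fintype Ω] [DecidableEq Ω] {A : CoherentConfig Ω}
variable {r u v t s' : Finset (Ω × Ω)} {Δ Γ : Finset Ω}

lemma relOf_exists (A : CoherentConfig Ω) (x : Ω × Ω) : ∃ u ∈ A.S, x ∈ u := by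
  obtain ⟨w, ⟨h1, h2⟩, -⟩ := A.partition x
  exact ⟨w, h1, h2⟩

lemma rel_unique (hu : u ∈ A.S) (hv : v ∈ A.S) {x : Ω × Ω}
    (hxu : x ∈ u) (hxv : x ∈ v) : u = v := by
  obtain ⟨w, -, hw⟩ := A.partition x
  rw [hw u ⟨hu, hxu⟩, hw v ⟨hv, hxv⟩]

lemma mem_star {α β : Ω} : (α, β) ∈ star u ↔ (β, α) ∈ u := by
  constructor
  · intro h
    obtain ⟨⟨a, b⟩, hy, he⟩ := Finset.mem_image.mp h
    cases he; exact hy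
  · intro h; exact Finset.mem_image.mpr ⟨(β, α), h, rfl⟩

lemma starStar (u : Finset (Ω × Ω)) : star (star u) = u := by
  ext ⟨a, b⟩; rw [mem_star, mem_star]

lemma star_mem (hu : u ∈ A.S) : star u ∈ A.S := A.symm_mem u hu

lemma star_subset_swap (h : u ⊆ Δ ×ˢ Γ) : star u ⊆ Γ ×ˢ Δ := by
  intro ⟨a, b⟩ hab
  have := h (mem_star.mp hab)
  simp only [Finset.mem_product] at this ⊢
  exact ⟨this.2, this.1⟩

lemma memDiag {α β : Ω} : (α, β) ∈ diagRel Δ ↔ α ∈ Δ ∧ β = α := by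
  constructor
  · intro h
    obtain ⟨d, hd, he⟩ := Finset.mem_image.mp h
    cases he; exact ⟨hd, rfl⟩
  · rintro ⟨h, rfl⟩; exact Finset.mem_image.mpr ⟨_, h, rfl⟩

lemma diag_self {α : Ω} (h : α ∈ Δ) : (α, α) ∈ diagRel Δ :=
  memDiag.mpr ⟨h, rfl⟩

lemma diag_subset : diagRel Δ ⊆ Δ ×ˢ Δ := by
  intro ⟨a, b⟩ h
  obtain ⟨h1, h2⟩ := memDiag.mp h
  subst h2; simp [h1]

lemma count_eq (hr : r ∈ A.S) (hs' : s' ∈ A.S) (hu : u ∈ A.S) {α β : Ω}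
    (hx : (α, β) ∈ u) :
    (Finset.univ.filter fun γ => (α, γ) ∈ r ∧ (γ, β) ∈ s').card = A.c r s' u :=
  A.c_spec r hr s' hs' u hu (α, β) hx

lemma c_pos_elim (hr : r ∈ A.S) (hs' : s' ∈ A.S) (hu : u ∈ A.S) {α β : Ω}
    (hx : (α, β) ∈ u) (hc : A.c r s' u ≠ 0) :
    ∃ γ, (α, γ) ∈ r ∧ (γ, β) ∈ s' := by
  rw [← count_eq hr hs' hu hx] at hc
  obtain ⟨γ, hγ⟩ := Finset.card_ne_zero.mp hc
  exact ⟨γ, (Finset.mem_filter.mp hγ).2⟩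

lemma c_pos_intro (hr : r ∈ A.S) (hs' : s' ∈ A.S) (hu : u ∈ A.S) {α β γ : Ω}
    (hx : (α, β) ∈ u) (h1 : (α, γ) ∈ r) (h2 : (γ, β) ∈ s') : A.c r s' u ≠ 0 := by
  rw [← count_eq hr hs' hu hx]
  exact Finset.card_ne_zero_of_mem (a := γ) (by simp [h1, h2])

/-- every first coordinate of `u` is in `Δ` once one is. -/
lemma fst_stable (hΔ : IsFiber A Δ) (hu : u ∈ A.S) {α β : Ω}
    (hx : (α, β) ∈ u) (hα : α ∈ Δ) : ∀ x ∈ u, x.1 ∈ Δ := by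
  intro x hxu
  have hc : A.c (diagRel Δ) u u ≠ 0 :=
    c_pos_intro hΔ hu hu hx (diag_self hα) hx
  obtain ⟨γ, h1, -⟩ := c_pos_elim hΔ hu hu (α := x.1) (β := x.2) (by simpa using hxu) hc
  obtain ⟨h, he⟩ := memDiag.mp h1
  exact h

lemma snd_stable (hΓ : IsFiber A Γ) (hu : u ∈ A.S) {α β : Ω}
    (hx : (α, β) ∈ u) (hβ : β ∈ Γ) : ∀ x ∈ u, x.2 ∈ Γ := by
  intro x hxu
  have hc : A.c u (diagRel Γ) u ≠ 0 :=
    c_pos_intro hu hΓ hu hx hx (diag_self hβ)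
  obtain ⟨γ, -, h2⟩ := c_pos_elim hu hΓ hu (α := x.1) (β := x.2) (by simpa using hxu) hc
  obtain ⟨h, he⟩ := memDiag.mp h2
  subst he; exact h

lemma rel_subset_product (hΔ : IsFiber A Δ) (hΓ : IsFiber A Γ) (hu : u ∈ A.S)
    {α β : Ω} (hx : (α, β) ∈ u) (hα : α ∈ Δ) (hβ : β ∈ Γ) : u ⊆ Δ ×ˢ Γ := by
  intro x hxu
  simp only [Finset.mem_product]
  exact ⟨fst_stable hΔ hu hx hα x hxu, snd_stable hΓ hu hx hβ x hxu⟩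

/-- the domain of a nonempty relation contained in `Δ ×ˢ Γ'` is all of `Δ`. -/
lemma dom_full (hΔ : IsFiber A Δ) (hu : u ∈ A.S) {Γ' : Finset Ω}
    (hsub : u ⊆ Δ ×ˢ Γ') {α : Ω} (hα : α ∈ Δ) : ∃ β, (α, β) ∈ u := by
  obtain ⟨⟨a, b⟩, hab⟩ := A.nonempty_mem u hu
  have ha : a ∈ Δ := (Finset.mem_product.mp (hsub hab)).1
  have hc : A.c u (star u) (diagRel Δ) ≠ 0 :=
    c_pos_intro hu (star_mem hu) hΔ (diag_self ha) hab (mem_star.mpr hab)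
  obtain ⟨γ, h1, -⟩ := c_pos_elim hu (star_mem hu) hΔ (diag_self hα) hc
  exact ⟨γ, h1⟩

lemma outdeg_eq {n : ℕ} (hv : HasValency u n) {α β : Ω} (hx : (α, β) ∈ u) :
    (Finset.univ.filter fun γ => (α, γ) ∈ u).card = n := hv (α, β) hx

lemma card_rel {n : ℕ} {Γ' : Finset Ω} (hΔ : IsFiber A Δ) (hu : u ∈ A.S)
    (hsub : u ⊆ Δ ×ˢ Γ') (hv : HasValency u n) : u.card = n * Δ.card := by
  rw [Finset.card_eq_sum_card_fiberwise (f := Prod.fst) (t := Δ)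
    (fun x hx => (Finset.mem_product.mp (hsub hx)).1)]
  rw [Finset.sum_congr rfl (g := fun _ => n), Finset.sum_const, smul_eq_mul, mul_comm]
  intro α hα
  obtain ⟨β, hβ⟩ := dom_full hΔ hu hsub hα
  rw [← outdeg_eq hv hβ]
  apply Finset.card_nbij (i := Prod.snd)
  · intro x hx
    simp only [Finset.coe_filter, Set.mem_setOf_eq, Finset.mem_coe, Finset.mem_filter] at hx ⊢
    refine ⟨Finset.mem_univ _, ?_⟩
    have : x = (α, x.2) := by
      have := hx.2; rw [Prod.ext_iff]; exact ⟨this, rfl⟩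
    rw [← this]; exact hx.1
  · intro x hx y hy hxy
    simp only [Finset.coe_filter, Set.mem_setOf_eq] at hx hy
    rw [Prod.ext_iff]; exact ⟨hx.2.trans hy.2.symm, hxy⟩
  · intro γ hγ
    simp only [Finset.coe_filter, Set.mem_setOf_eq, Set.mem_image] at hγ ⊢
    exact ⟨(α, γ), ⟨hγ.2, rfl⟩, rfl⟩

end Aux

section Thin

variable {Ω : Type} [Fintype Ω] [DecidableEq Ω] {A : CoherentConfig Ω}
variable {p : ℕ} {u t t' : Finset (Ω × Ω)} {Δ : Finset Ω}

lemma WreathFiber.fiber (h : WreathFiber p A Δ) : IsFiber A Δ := h.1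
lemma WreathFiber.degree (h : WreathFiber p A Δ) : Δ.card = p ^ 2 := h.2.1
lemma WreathFiber.thins (h : WreathFiber p A Δ) :
    (A.S.filter fun s => IsThinOn A Δ s).card = p := h.2.2.1
lemma WreathFiber.dichot (h : WreathFiber p A Δ) :
    ∀ s ∈ A.S, s ⊆ Δ ×ˢ Δ → HasValency s 1 ∨ HasValency s p := h.2.2.2.1
lemma WreathFiber.closed (h : WreathFiber p A Δ) :
    ∀ s t u : Finset (Ω × Ω), IsThinOn A Δ s → IsThinOn A Δ t → u ∈ A.S →
      A.c s (star t) u ≠ 0 → IsThinOn A Δ u := h.2.2.2.2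
lemma WreathFiber.nonempty (h : WreathFiber p A Δ) (hp : p.Prime) : Δ.Nonempty := by
  apply Finset.card_pos.mp
  rw [h.degree]
  have := hp.pos; positivity

lemma thin_diag (hΔ : IsFiber A Δ) : IsThinOn A Δ (diagRel Δ) := by
  refine ⟨hΔ, diag_subset, ?_⟩
  rintro ⟨a, b⟩ hab
  obtain ⟨ha, he⟩ := memDiag.mp hab
  have hfa : (Finset.univ.filter fun γ => (a, γ) ∈ diagRel Δ) = {a} := by
    ext γ; simp [memDiag, ha]
  simp only []
  rw [hfa]; simp

lemma val1_unique (hv : HasValency t 1) {α β β' : Ω}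
    (h1 : (α, β) ∈ t) (h2 : (α, β') ∈ t) : β = β' := by
  obtain ⟨a, ha⟩ := Finset.card_eq_one.mp (outdeg_eq hv h1)
  have hβ : β ∈ Finset.univ.filter fun γ => (α, γ) ∈ t := by simp [h1]
  have hβ' : β' ∈ Finset.univ.filter fun γ => (α, γ) ∈ t := by simp [h2]
  rw [ha, Finset.mem_singleton] at hβ hβ'
  rw [hβ, hβ']

noncomputable def phi (t : Finset (Ω × Ω)) (α : Ω) : Ω :=
  if h : ∃ β, (α, β) ∈ t then h.choose else α

lemma phi_mem {α : Ω} (h : ∃ β, (α, β) ∈ t) : (α, phi t α) ∈ t := by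
  rw [phi, dif_pos h]; exact h.choose_spec

lemma phi_eq (hv : HasValency t 1) {α β : Ω} (h : (α, β) ∈ t) : phi t α = β :=
  val1_unique hv (phi_mem ⟨β, h⟩) h

lemma thin_phi_mem (hΔ : IsFiber A Δ) (ht : IsThinOn A Δ t) {α : Ω} (hα : α ∈ Δ) :
    (α, phi t α) ∈ t :=
  phi_mem (dom_full hΔ ht.1 ht.2.1 hα)

lemma thin_phi_mem_dom (hΔ : IsFiber A Δ) (ht : IsThinOn A Δ t) {α : Ω} (hα : α ∈ Δ) :
    phi t α ∈ Δ :=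
  (Finset.mem_product.mp (ht.2.1 (thin_phi_mem hΔ ht hα))).2

lemma card_star (u : Finset (Ω × Ω)) : (star u).card = u.card := by
  exact Finset.card_image_of_injective _ Prod.swap_injective

lemma thin_star' (hp : p.Prime) (hW : WreathFiber p A Δ) (ht : IsThinOn A Δ t) :
    IsThinOn A Δ (star t) := by
  have h1 : star t ∈ A.S := star_mem ht.1
  have h2 : star t ⊆ Δ ×ˢ Δ := star_subset_swap ht.2.1
  refine ⟨h1, h2, ?_⟩
  rcases hW.dichot _ h1 h2 with h | h
  · exact h
  · exfalso
    have e1 : (star t).card = p * Δ.card := card_rel hW.fiber h1 h2 h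
    have e3 : t.card = 1 * Δ.card := card_rel hW.fiber ht.1 ht.2.1 ht.2.2
    have hΔpos : 0 < Δ.card := Finset.card_pos.mpr (hW.nonempty hp)
    have := hp.two_le
    rw [card_star, e3] at e1
    have : 1 = p := Nat.eq_of_mul_eq_mul_right hΔpos e1
    omega

lemma thin_phi_inj (hp : p.Prime) (hW : WreathFiber p A Δ) (ht : IsThinOn A Δ t)
    {α α' : Ω} (hα : α ∈ Δ) (hα' : α' ∈ Δ) (h : phi t α = phi t α') : α = α' := by
  have h1 := thin_phi_mem hW.fiber ht hα
  have h2 := thin_phi_mem hW.fiber ht hα'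
  rw [h] at h1
  exact val1_unique (thin_star' hp hW ht).2.2 (mem_star.mpr h1) (mem_star.mpr h2)

lemma thin_comp (hp : p.Prime) (hW : WreathFiber p A Δ)
    (ht : IsThinOn A Δ t) (ht' : IsThinOn A Δ t') :
    ∃ t'', IsThinOn A Δ t'' ∧ ∀ α ∈ Δ, (α, phi t' (phi t α)) ∈ t'' := by
  obtain ⟨α₀, hα₀⟩ := hW.nonempty hp
  obtain ⟨u, hu, hxu⟩ := relOf_exists A (α₀, phi t' (phi t α₀))
  have hkey : A.c t (star (star t')) u ≠ 0 := by
    rw [starStar]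
    exact c_pos_intro ht.1 ht'.1 hu hxu (thin_phi_mem hW.fiber ht hα₀)
      (thin_phi_mem hW.fiber ht' (thin_phi_mem_dom hW.fiber ht hα₀))
  have hthin : IsThinOn A Δ u :=
    hW.closed t (star t') u ht (thin_star' hp hW ht') hu hkey
  refine ⟨u, hthin, ?_⟩
  intro α hα
  obtain ⟨δ, hδ⟩ := dom_full hW.fiber hthin.1 hthin.2.1 hα
  rw [starStar] at hkey
  obtain ⟨γ, h1, h2⟩ := c_pos_elim ht.1 ht'.1 hu hδ hkey
  have hγ : γ = phi t α := (phi_eq ht.2.2 h1).symm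
  subst hγ
  have hδ2 : δ = phi t' (phi t α) := (phi_eq ht'.2.2 h2).symm
  rw [← hδ2]; exact hδ

end Thin

section Generic

variable {X : Type*} [DecidableEq X]

lemma iter_per_mul {f : X → X} {x : X} {b : ℕ} (h : f^[b] x = x) :
    ∀ k, f^[b * k] x = x := by
  intro k
  induction k with
  | zero => simp
  | succ n ih => rw [Nat.mul_succ, Function.iterate_add_apply, h, ih]

lemma iter_per_gcd {f : X → X} {x : X} :
    ∀ a b : ℕ, f^[a] x = x → f^[b] x = x → f^[Nat.gcd a b] x = x := by
  intro a
  induction a using Nat.strong_induction_on with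
  | _ a ih =>
  intro b ha hb
  rcases Nat.eq_zero_or_pos a with rfl | hapos
  · simpa using hb
  · rw [Nat.gcd_rec]
    have hmod : f^[b % a] x = x := by
      have hdm : a * (b / a) + b % a = b := Nat.div_add_mod b a
      have : f^[b % a + a * (b / a)] x = x := by rw [Nat.add_comm, hdm]; exact hb
      rw [Function.iterate_add_apply, iter_per_mul ha] at this
      exact this
    exact ih _ (Nat.mod_lt _ hapos) a hmod ha

lemma no_small_period {f : X → X} {x : X} {q : ℕ} (hq : q.Prime)
    (hper : f^[q] x = x) (hne : f x ≠ x) :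
    ∀ d, 0 < d → d < q → f^[d] x ≠ x := by
  intro d hd1 hd2 hdx
  have hgcd : f^[Nat.gcd q d] x = x := iter_per_gcd q d hper hdx
  have hcop : Nat.gcd q d = 1 := by
    have hnd : ¬ q ∣ d := Nat.not_dvd_of_pos_of_lt hd1 hd2
    exact (Nat.Prime.coprime_iff_not_dvd hq).mpr hnd
  rw [hcop] at hgcd
  simp only [Function.iterate_one] at hgcd
  exact hne hgcd

lemma iter_distinct {f : X → X} {x : X} {q : ℕ}
    (hper : f^[q] x = x)
    (hnop : ∀ d, 0 < d → d < q → f^[d] x ≠ x) :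
    ∀ i j, i < j → j < q → f^[i] x ≠ f^[j] x := by
  intro i j hij hj he
  have h1 : f^[q - j] (f^[j] x) = x := by
    rw [← Function.iterate_add_apply, Nat.sub_add_cancel (le_of_lt hj)]
    exact hper
  rw [← he, ← Function.iterate_add_apply] at h1
  have h2 : 0 < q - j + i := by omega
  have h3 : q - j + i < q := by omega
  exact hnop _ h2 h3 h1

lemma prime_fix {q : ℕ} (hq : q.Prime) (T : Finset X) (f : X → X)
    (hmap : ∀ x ∈ T, f x ∈ T) (hper : ∀ x ∈ T, f^[q] x = x) (hcard : T.card < q) :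
    ∀ x ∈ T, f x = x := by
  intro x hx
  by_contra hne
  have hiter : ∀ k, f^[k] x ∈ T := by
    intro k
    induction k with
    | zero => simpa using hx
    | succ n ih => rw [Function.iterate_succ_apply']; exact hmap _ ih
  have hnop := no_small_period hq (hper x hx) hne
  have hdist := iter_distinct (hper x hx) hnop
  have hle : (Finset.range q).card ≤ T.card := by
    apply Finset.card_le_card_of_injOn (fun k => f^[k] x) (fun k _ => hiter k)
    intro i hi j hj he
    simp only [Finset.coe_range, Set.mem_Iio] at hi hj
    rcases lt_trichotomy i j with h | h | h
    · exact absurd he (hdist i j h hj)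
    · exact h
    · exact absurd he.symm (hdist j i h hi)
  rw [Finset.card_range] at hle
  omega

lemma orbit_dvd {m : ℕ} (hm : 0 < m) (D : Finset X) (f : X → X)
    (hmap : ∀ x ∈ D, f x ∈ D) (hinj : ∀ x ∈ D, ∀ y ∈ D, f x = f y → x = y)
    (hper : ∀ x ∈ D, f^[m] x = x) (hnop : ∀ k, 0 < k → k < m → ∀ x ∈ D, f^[k] x ≠ x) :
    m ∣ D.card := by
  classical
  induction D using Finset.strongInduction with
  | _ D ih =>
  rcases D.eq_empty_or_nonempty with rfl | ⟨x, hx⟩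
  · simp
  · have hiter : ∀ k, f^[k] x ∈ D := by
      intro k
      induction k with
      | zero => simpa using hx
      | succ n ihk => rw [Function.iterate_succ_apply']; exact hmap _ ihk
    set O := (Finset.range m).image (fun k => f^[k] x) with hO
    have hOD : O ⊆ D := by
      intro y hy
      obtain ⟨k, -, rfl⟩ := Finset.mem_image.mp hy
      exact hiter k
    have hdist : ∀ i j, i < j → j < m → f^[i] x ≠ f^[j] x :=
      iter_distinct (hper x hx) (fun k h1 h2 => hnop k h1 h2 x hx)
    have hcardO : O.card = m := by
      rw [hO, Finset.card_image_of_injOn, Finset.card_range]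
      intro i hi j hj he
      simp only [Finset.coe_range, Set.mem_Iio] at hi hj
      rcases lt_trichotomy i j with h | h | h
      · exact absurd he (hdist i j h hj)
      · exact h
      · exact absurd he.symm (hdist j i h hi)
    have hxO : x ∈ O := by
      apply Finset.mem_image.mpr ⟨0, Finset.mem_range.mpr hm, rfl⟩
    have hssub : D \ O ⊂ D := by
      apply Finset.sdiff_ssubset ?_ ⟨x, hxO⟩
      exact hOD
    have hmapO : ∀ y, y ∈ D → f y ∈ O → y ∈ O := by
      intro y hyD hfy
      obtain ⟨k, hk, hke⟩ := Finset.mem_image.mp hfy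
      rcases Nat.eq_zero_or_pos k with rfl | hkpos
      · have e1 : f (f^[m-1] x) = x := by
          have h := Function.iterate_succ_apply' f (m-1) x
          rw [Nat.succ_eq_add_one, show m - 1 + 1 = m by omega, hper x hx] at h
          exact h.symm
        have hyx : f y = x := by simpa using hke.symm
        have hfy2 : f y = f (f^[m-1] x) := by rw [hyx]; exact e1.symm
        have hye := hinj y hyD _ (hiter (m-1)) hfy2
        rw [hye]
        exact Finset.mem_image.mpr ⟨m-1, Finset.mem_range.mpr (by omega), rfl⟩
      · have hkm : k < m := Finset.mem_range.mp hk
        have h := Function.iterate_succ_apply' f (k-1) x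
        rw [Nat.succ_eq_add_one, show k - 1 + 1 = k by omega] at h
        have hfy2 : f y = f (f^[k-1] x) := by rw [← hke, h]
        have hye := hinj y hyD _ (hiter (k-1)) hfy2
        rw [hye]
        exact Finset.mem_image.mpr ⟨k-1, Finset.mem_range.mpr (by omega), rfl⟩
    have hmap' : ∀ y ∈ D \ O, f y ∈ D \ O := by
      intro y hy
      obtain ⟨hyD, hyO⟩ := Finset.mem_sdiff.mp hy
      refine Finset.mem_sdiff.mpr ⟨hmap y hyD, fun hfy => hyO (hmapO y hyD hfy)⟩
    have hdvd' : m ∣ (D \ O).card :=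
      ih _ hssub (fun y hy => hmap' y hy)
        (fun y hy z hz he => hinj y (Finset.mem_sdiff.mp hy).1 z (Finset.mem_sdiff.mp hz).1 he)
        (fun y hy => hper y (Finset.mem_sdiff.mp hy).1)
        (fun k h1 h2 y hy => hnop k h1 h2 y (Finset.mem_sdiff.mp hy).1)
    have hcards : D.card = (D \ O).card + m := by
      rw [Finset.card_sdiff_of_subset hOD, hcardO]
      have : O.card ≤ D.card := Finset.card_le_card hOD
      omega
    rw [hcards]
    exact Nat.dvd_add hdvd' dvd_rfl

lemma iter_mod {f : X → X} {x : X} {q : ℕ} (hq : 0 < q) (hper : f^[q] x = x) :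
    ∀ n, f^[n] x = f^[n % q] x := by
  intro n
  induction n using Nat.strong_induction_on with
  | _ n ih =>
  rcases Nat.lt_or_ge n q with h | h
  · rw [Nat.mod_eq_of_lt h]
  · have h1 : f^[n] x = f^[n - q] x := by
      have h2 : f^[n - q + q] x = f^[n - q] (f^[q] x) := Function.iterate_add_apply f _ _ _
      rw [show n - q + q = n by omega, hper] at h2
      exact h2
    rw [h1, ih (n - q) (by omega), Nat.mod_eq_sub_mod h]

end Generic

section Psi

variable {Ω : Type} [Fintype Ω] [DecidableEq Ω] {A : CoherentConfig Ω} {p : ℕ} {Δ : Finset Ω}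

lemma psi_pack (hp : p.Prime) (hW : WreathFiber p A Δ) :
    ∃ (ψ : Ω → Ω) (tp : ℕ → Finset (Ω × Ω)),
      (∀ k, ∀ α ∈ Δ, ψ^[k] α ∈ Δ) ∧
      (∀ k, ∀ α ∈ Δ, ∀ β ∈ Δ, ψ^[k] α = ψ^[k] β → α = β) ∧
      (∀ α ∈ Δ, ψ^[p] α = α) ∧
      (∀ k, 0 < k → k < p → ∀ α ∈ Δ, ψ^[k] α ≠ α) ∧
      (∀ k, IsThinOn A Δ (tp k)) ∧
      (∀ k, ∀ α ∈ Δ, (α, ψ^[k] α) ∈ tp k) ∧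
      (∀ t, IsThinOn A Δ t → ∃ k, k < p ∧ t = tp k) := by
  classical
  have hΔ := hW.fiber
  -- a thin relation distinct from the diagonal
  have hcard2 : 1 < (A.S.filter fun s => IsThinOn A Δ s).card := by
    rw [hW.thins]; exact hp.one_lt
  obtain ⟨t₁, ht₁f, ht₁d⟩ :=
    Finset.exists_mem_ne hcard2 (diagRel Δ)
  have ht₁ : IsThinOn A Δ t₁ := (Finset.mem_filter.mp ht₁f).2
  set ψ := phi t₁ with hψ
  have hmaps : ∀ α ∈ Δ, ψ α ∈ Δ := fun α hα => thin_phi_mem_dom hΔ ht₁ hα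
  have hinj : ∀ α ∈ Δ, ∀ β ∈ Δ, ψ α = ψ β → α = β :=
    fun α hα β hβ h => thin_phi_inj hp hW ht₁ hα hβ h
  have hitermaps : ∀ k, ∀ α ∈ Δ, ψ^[k] α ∈ Δ := by
    intro k
    induction k with
    | zero => simp
    | succ n ih =>
      intro α hα
      rw [Function.iterate_succ_apply']
      exact hmaps _ (ih α hα)
  have hiterinj : ∀ k, ∀ α ∈ Δ, ∀ β ∈ Δ, ψ^[k] α = ψ^[k] β → α = β := by
    intro k
    induction k with
    | zero => simp
    | succ n ih =>
      intro α hα β hβ h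
      rw [Function.iterate_succ_apply', Function.iterate_succ_apply'] at h
      exact ih α hα β hβ (hinj _ (hitermaps n α hα) _ (hitermaps n β hβ) h)
  -- the iterated thin relations
  have titer : ∀ k : ℕ, ∃ u, IsThinOn A Δ u ∧ ∀ α ∈ Δ, (α, ψ^[k] α) ∈ u := by
    intro k
    induction k with
    | zero => exact ⟨diagRel Δ, thin_diag hΔ, fun α hα => by simpa using diag_self hα⟩
    | succ n ih =>
      obtain ⟨u, hu, hspec⟩ := ih
      obtain ⟨t'', ht'', hspec''⟩ := thin_comp hp hW hu ht₁
      refine ⟨t'', ht'', fun α hα => ?_⟩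
      have h1 : phi u α = ψ^[n] α := phi_eq hu.2.2 (hspec α hα)
      have := hspec'' α hα
      rw [h1] at this
      rw [Function.iterate_succ_apply']
      exact this
  choose tp htp1 htp2 using titer
  -- rigidity of fixed points
  have hrig : ∀ k, ∀ α ∈ Δ, ψ^[k] α = α → ∀ β ∈ Δ, ψ^[k] β = β := by
    intro k α hα hfix β hβ
    have h1 : (α, α) ∈ tp k := by
      have h0 := htp2 k α hα
      rw [hfix] at h0
      exact h0
    have h2 : tp k = diagRel Δ := rel_unique (htp1 k).1 hΔ h1 (diag_self hα)
    have h3 := htp2 k β hβ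
    rw [h2] at h3
    exact (memDiag.mp h3).2
  have hΔne : Δ.Nonempty := hW.nonempty hp
  obtain ⟨α₀, hα₀⟩ := hΔne
  -- existence of a period
  have hperex : ∃ m, 0 < m ∧ ∀ α ∈ Δ, ψ^[m] α = α := by
    have hnoinj : ¬ Function.Injective (fun k : Fin (Δ.card + 1) => ψ^[(k : ℕ)] α₀) := by
      intro hin
      have hmem : ∀ k : Fin (Δ.card + 1), ψ^[(k : ℕ)] α₀ ∈ Δ := fun k => hitermaps _ _ hα₀
      have hle2 : Fintype.card (Fin (Δ.card + 1)) ≤ Fintype.card {x // x ∈ Δ} :=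
        Fintype.card_le_of_injective (fun k : Fin (Δ.card + 1) =>
          (⟨ψ^[(k : ℕ)] α₀, hmem k⟩ : {x // x ∈ Δ}))
          (fun a b hab => hin (congrArg Subtype.val hab))
      rw [Fintype.card_coe, Fintype.card_fin] at hle2
      omega
    rw [Function.not_injective_iff] at hnoinj
    obtain ⟨i, j, hij, hne⟩ := hnoinj
    rcases Nat.lt_or_ge (i : ℕ) (j : ℕ) with h | h
    · have hadd : ψ^[(i:ℕ) + ((j:ℕ) - (i:ℕ))] α₀ = ψ^[(i:ℕ)] (ψ^[(j:ℕ)-(i:ℕ)] α₀) :=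
        Function.iterate_add_apply ψ _ _ _
      rw [show (i:ℕ) + ((j:ℕ) - (i:ℕ)) = (j:ℕ) by omega] at hadd
      have : ψ^[(j:ℕ)-(i:ℕ)] α₀ = α₀ :=
        hiterinj (i:ℕ) _ (hitermaps _ _ hα₀) _ hα₀ (by rw [← hadd]; exact hij.symm)
      exact ⟨(j:ℕ)-(i:ℕ), by
        have : (i:ℕ) ≠ (j:ℕ) := fun hh => hne (Fin.ext hh)
        omega, hrig _ _ hα₀ this⟩
    · have hadd : ψ^[(j:ℕ) + ((i:ℕ) - (j:ℕ))] α₀ = ψ^[(j:ℕ)] (ψ^[(i:ℕ)-(j:ℕ)] α₀) :=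
        Function.iterate_add_apply ψ _ _ _
      have hij' : (i:ℕ) ≠ (j:ℕ) := fun hh => hne (Fin.ext hh)
      rw [show (j:ℕ) + ((i:ℕ) - (j:ℕ)) = (i:ℕ) by omega] at hadd
      have : ψ^[(i:ℕ)-(j:ℕ)] α₀ = α₀ :=
        hiterinj (j:ℕ) _ (hitermaps _ _ hα₀) _ hα₀ (by rw [← hadd]; exact hij)
      exact ⟨(i:ℕ)-(j:ℕ), by omega, hrig _ _ hα₀ this⟩
  set m := Nat.find hperex with hmdef
  obtain ⟨hmpos, hmper⟩ := Nat.find_spec hperex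
  rw [← hmdef] at hmpos hmper
  have hnop : ∀ k, 0 < k → k < m → ∀ α ∈ Δ, ψ^[k] α ≠ α := by
    intro k hk1 hk2 α hα hfix
    exact (Nat.find_min hperex hk2) ⟨hk1, hrig _ _ hα hfix⟩
  -- tp is injective below m
  have htpinj : ∀ i j, i < j → j < m → tp i ≠ tp j := by
    intro i j hij hj he
    have hper' : ∀ α ∈ Δ, ψ^[j - i] α = α := by
      intro α hα
      have h1 : (α, ψ^[i] α) ∈ tp j := by rw [← he]; exact htp2 i α hα
      have h2 : ψ^[i] α = ψ^[j] α := val1_unique (htp1 j).2.2 h1 (htp2 j α hα)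
      have hadd : ψ^[i + (j - i)] α = ψ^[i] (ψ^[j-i] α) := Function.iterate_add_apply ψ _ _ _
      rw [show i + (j - i) = j by omega] at hadd
      exact hiterinj i _ (hitermaps _ _ hα) _ hα (by rw [← hadd]; exact h2.symm)
    exact hnop (j - i) (by omega) (by omega) α₀ hα₀ (hper' α₀ hα₀)
  have himcard : ((Finset.range m).image tp).card = m := by
    rw [Finset.card_image_of_injOn, Finset.card_range]
    intro i hi j hj he
    simp only [Finset.coe_range, Set.mem_Iio] at hi hj
    rcases lt_trichotomy i j with h | h | h
    · exact absurd he (htpinj i j h hj)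
    · exact h
    · exact absurd he.symm (htpinj j i h hi)
  have hsub : (Finset.range m).image tp ⊆ A.S.filter fun s => IsThinOn A Δ s := by
    intro t ht
    obtain ⟨k, -, rfl⟩ := Finset.mem_image.mp ht
    exact Finset.mem_filter.mpr ⟨(htp1 k).1, htp1 k⟩
  have hmlep : m ≤ p := by
    calc m = ((Finset.range m).image tp).card := himcard.symm
    _ ≤ (A.S.filter fun s => IsThinOn A Δ s).card := Finset.card_le_card hsub
    _ = p := hW.thins
  have hdvd : m ∣ p ^ 2 := by
    have := orbit_dvd hmpos Δ ψ (fun x hx => hmaps x hx) (fun x hx y hy => hinj x hx y hy)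
      hmper (fun k h1 h2 x hx => hnop k h1 h2 x hx)
    rwa [hW.degree] at this
  have hmp : m = p := by
    obtain ⟨i, hi, hie⟩ := (Nat.dvd_prime_pow hp).mp hdvd
    interval_cases i
    · exfalso
      have h1 : ψ α₀ = α₀ := by
        have := hmper α₀ hα₀
        rw [hie] at this
        simpa using this
      have h2 : (α₀, α₀) ∈ t₁ := by
        have := thin_phi_mem hΔ ht₁ hα₀
        rw [show phi t₁ α₀ = α₀ from h1] at this
        exact this
      exact ht₁d (rel_unique ht₁.1 hΔ h2 (diag_self hα₀))
    · simpa using hie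
    · exfalso
      rw [hie] at hmlep
      have h2 := hp.two_le
      have : p * p ≤ p := by simpa [pow_two] using hmlep
      nlinarith
  have hcomp : ∀ t, IsThinOn A Δ t → ∃ k, k < p ∧ t = tp k := by
    intro t ht
    rw [hmp] at himcard hsub
    have himg : (Finset.range p).image tp = A.S.filter fun s => IsThinOn A Δ s :=
      Finset.eq_of_subset_of_card_le hsub (by rw [hW.thins, himcard])
    have : t ∈ (Finset.range p).image tp := by
      rw [himg]; exact Finset.mem_filter.mpr ⟨ht.1, ht⟩
    obtain ⟨k, hk, he⟩ := Finset.mem_image.mp this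
    exact ⟨k, Finset.mem_range.mp hk, he.symm⟩
  refine ⟨ψ, tp, hitermaps, hiterinj, ?_, ?_, htp1, htp2, hcomp⟩
  · intro α hα; rw [← hmp]; exact hmper α hα
  · intro k h1 h2; rw [← hmp] at h2; exact hnop k h1 h2

end Psi

section MainB

variable {Ω : Type} [Fintype Ω] [DecidableEq Ω]
variable {p : ℕ} {A : CoherentConfig Ω} {Δ Γ : Finset Ω} {s : Finset (Ω × Ω)}

/-- For `α ∈ Δ`, the common-neighbour counts of `α` against all points sum to `p²`. -/
lemma sum_F (hΔ : IsFiber A Δ) (hs : s ∈ A.S) (hsub : s ⊆ Δ ×ˢ Γ)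
    (hval : HasValency s p) (hsval : HasValency (star s) p) {α : Ω} (hα : α ∈ Δ) :
    (∑ β : Ω, (Finset.univ.filter fun γ => (α, γ) ∈ s ∧ (β, γ) ∈ s).card) = p * p := by
  have hre : ∀ β : Ω, (Finset.univ.filter fun γ => (α, γ) ∈ s ∧ (β, γ) ∈ s).card
      = ∑ γ : Ω, if (α, γ) ∈ s ∧ (β, γ) ∈ s then 1 else 0 :=
    fun β => Finset.card_filter _ _
  calc (∑ β : Ω, (Finset.univ.filter fun γ => (α, γ) ∈ s ∧ (β, γ) ∈ s).card)
      = ∑ β : Ω, ∑ γ : Ω, if (α, γ) ∈ s ∧ (β, γ) ∈ s then 1 else 0 :=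
        Finset.sum_congr rfl fun β _ => hre β
  _ = ∑ γ : Ω, ∑ β : Ω, if (α, γ) ∈ s ∧ (β, γ) ∈ s then 1 else 0 := Finset.sum_comm
  _ = ∑ γ : Ω, (if (α, γ) ∈ s then p else 0) := by
        apply Finset.sum_congr rfl
        intro γ _
        by_cases h : (α, γ) ∈ s
        · simp only [h, true_and, if_true]
          have h2 : (Finset.univ.filter fun β => (γ, β) ∈ star s).card = p :=
            outdeg_eq hsval (mem_star.mpr h)
          have h3 : (Finset.univ.filter fun β => (β, γ) ∈ s)
              = (Finset.univ.filter fun β => (γ, β) ∈ star s) := by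
            ext β; simp [mem_star]
          rw [← Finset.card_filter, h3, h2]
        · simp [h]
  _ = ∑ γ ∈ Finset.univ.filter (fun γ => (α, γ) ∈ s), p := (Finset.sum_filter _ _).symm
  _ = p * (Finset.univ.filter fun γ => (α, γ) ∈ s).card := by
        rw [Finset.sum_const, smul_eq_mul, mul_comm]
  _ = p * p := by
        obtain ⟨γ', hγ'⟩ := dom_full hΔ hs hsub hα
        rw [outdeg_eq hval hγ']

/-- The heart of the argument: if `s` is non-regular then no thin relation other than
the diagonal appears in `s s*`. -/
lemma cB (hp : p.Prime) (hW : WreathFiber p A Δ)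
    (hs : s ∈ A.S) (hsub : s ⊆ Δ ×ˢ Γ) (hval : HasValency s p)
    (hsval : HasValency (star s) p) (hnreg : ¬ Regular A s)
    {t : Finset (Ω × Ω)} (ht : IsThinOn A Δ t) (htd : t ≠ diagRel Δ) :
    A.c s (star s) t = 0 := by
  classical
  by_contra hc0
  have hΔ := hW.fiber
  obtain ⟨ψ, tp, hψmaps, hψinj, hψper, hψnop, htpthin, htpmem, htpcomp⟩ := psi_pack hp hW
  -- t = tp k₀ with 0 < k₀ < p
  obtain ⟨k₀, hk₀p, htk₀⟩ := htpcomp t ht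
  have hk₀0 : 0 < k₀ := by
    rcases Nat.eq_zero_or_pos k₀ with rfl | h
    · exfalso
      obtain ⟨⟨a, b⟩, hab⟩ := A.nonempty_mem t ht.1
      have ha : a ∈ Δ := (Finset.mem_product.mp (ht.2.1 hab)).1
      have : (a, a) ∈ t := by
        have := htpmem 0 a ha
        rw [← htk₀] at this
        simpa using this
      exact htd (rel_unique ht.1 hΔ this (diag_self ha))
    · exact h
  -- the one-step closure property s(ψ^[k₀] α) ⊇ s(α)
  have hstep : ∀ α γ : Ω, (α, γ) ∈ s → (ψ^[k₀] α, γ) ∈ s := by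
    -- first find a witness making c t s s ≠ 0
    obtain ⟨⟨a₁, b₁⟩, hab₁⟩ := A.nonempty_mem t ht.1
    have ha₁ : a₁ ∈ Δ := (Finset.mem_product.mp (ht.2.1 hab₁)).1
    obtain ⟨γ₀, hg1, hg2⟩ := c_pos_elim hs (star_mem hs) ht.1 hab₁ hc0
    have hg2' : (b₁, γ₀) ∈ s := mem_star.mp hg2
    have hcts : A.c t s s ≠ 0 := c_pos_intro ht.1 hs hs hg1 hab₁ hg2'
    intro α γ hαγ
    obtain ⟨β, hb1, hb2⟩ := c_pos_elim ht.1 hs hs hαγ hcts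
    have hα : α ∈ Δ := (Finset.mem_product.mp (ht.2.1 hb1)).1
    have : β = ψ^[k₀] α := by
      apply val1_unique ht.2.2 hb1
      rw [htk₀]; exact htpmem k₀ α hα
    rw [← this]; exact hb2
  -- iterated closure
  have hIter : ∀ n (α γ : Ω), (α, γ) ∈ s → (ψ^[k₀ * n] α, γ) ∈ s := by
    intro n
    induction n with
    | zero => intro α γ h; simpa using h
    | succ m ih =>
      intro α γ h
      have h1 := hstep _ _ (ih α γ h)
      rw [← Function.iterate_add_apply] at h1
      rw [show k₀ * (m + 1) = k₀ + k₀ * m by ring]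
      exact h1
  -- reduction modulo p
  have hmod : ∀ n, ∀ α ∈ Δ, ψ^[n] α = ψ^[n % p] α := by
    intro n
    induction n using Nat.strong_induction_on with
    | _ n ih =>
    intro α hα
    rcases Nat.lt_or_ge n p with h | h
    · rw [Nat.mod_eq_of_lt h]
    · have h1 : ψ^[n] α = ψ^[n - p] α := by
        have : ψ^[n - p + p] α = ψ^[n - p] (ψ^[p] α) := Function.iterate_add_apply ψ _ _ _
        rw [show n - p + p = n by omega, hψper α hα] at this
        exact this
      rw [h1, ih (n - p) (by have := hp.pos; omega) α hα, Nat.mod_eq_sub_mod h]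
  -- all residues are periods
  haveI : Fact p.Prime := ⟨hp⟩
  have hall : ∀ l, l < p → ∀ α γ : Ω, (α, γ) ∈ s → (ψ^[l] α, γ) ∈ s := by
    intro l hl α γ hαγ
    have hα : α ∈ Δ := (Finset.mem_product.mp (hsub hαγ)).1
    have hk₀ne : (k₀ : ZMod p) ≠ 0 := by
      rw [Ne, ZMod.natCast_eq_zero_iff]
      exact Nat.not_dvd_of_pos_of_lt hk₀0 hk₀p
    set x : ZMod p := (l : ZMod p) * (k₀ : ZMod p)⁻¹ with hx
    have hcast : ((k₀ * x.val : ℕ) : ZMod p) = (l : ZMod p) := by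
      push_cast
      rw [ZMod.natCast_val, ZMod.cast_id]
      rw [hx, mul_comm ((l : ZMod p)) _, ← mul_assoc, mul_inv_cancel₀ hk₀ne, one_mul]
    have hmodeq : (k₀ * x.val) % p = l % p := (ZMod.natCast_eq_natCast_iff _ _ _).mp hcast
    have h1 := hIter x.val α γ hαγ
    rw [hmod _ α hα, hmodeq, Nat.mod_eq_of_lt hl] at h1
    exact h1
  -- counting: for α ∈ Δ the common-neighbour counts sum to p²
  set F : Ω → Ω → ℕ := fun α β => (Finset.univ.filter fun γ => (α, γ) ∈ s ∧ (β, γ) ∈ s).card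
    with hF
  have hsum : ∀ α ∈ Δ, (∑ β : Ω, F α β) = p * p := by
    intro α hα
    simp only [hF]
    exact sum_F hΔ hs hsub hval hsval hα
  -- F is p on the orbit of α and vanishes off it
  have hFp : ∀ α ∈ Δ, ∀ k, k < p → F α (ψ^[k] α) = p := by
    intro α hα k hk
    have he : (Finset.univ.filter fun γ => (α, γ) ∈ s ∧ (ψ^[k] α, γ) ∈ s)
        = Finset.univ.filter fun γ => (α, γ) ∈ s := by
      ext γ
      simp only [Finset.mem_filter, Finset.mem_univ, true_and]
      exact ⟨fun h => h.1, fun h => ⟨h, hall k hk α γ h⟩⟩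
    show (Finset.univ.filter fun γ => (α, γ) ∈ s ∧ (ψ^[k] α, γ) ∈ s).card = p
    rw [he]
    obtain ⟨γ', hγ'⟩ := dom_full hΔ hs hsub hα
    exact outdeg_eq hval hγ'
  have horbcard : ∀ α ∈ Δ, ((Finset.range p).image fun k => ψ^[k] α).card = p := by
    intro α hα
    rw [Finset.card_image_of_injOn, Finset.card_range]
    have hdist := iter_distinct (f := ψ) (x := α) (hψper α hα)
      (fun d h1 h2 => hψnop d h1 h2 α hα)
    intro i hi j hj he
    simp only [Finset.coe_range, Set.mem_Iio] at hi hj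
    rcases lt_trichotomy i j with h | h | h
    · exact absurd he (hdist i j h hj)
    · exact h
    · exact absurd he.symm (hdist j i h hi)
  have hFzero : ∀ α ∈ Δ, ∀ β, β ∉ ((Finset.range p).image fun k => ψ^[k] α) → F α β = 0 := by
    intro α hα β hβ
    set B := (Finset.range p).image fun k => ψ^[k] α with hB
    have hBsum : ∑ b ∈ B, F α b = p * p := by
      have hc : ∀ b ∈ B, F α b = p := by
        intro b hb
        obtain ⟨k, hk, rfl⟩ := Finset.mem_image.mp hb
        exact hFp α hα k (Finset.mem_range.mp hk)
      rw [Finset.sum_congr rfl hc, Finset.sum_const, horbcard α hα, smul_eq_mul]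
    have hsplit : (∑ b ∈ Finset.univ \ B, F α b) + ∑ b ∈ B, F α b = ∑ b : Ω, F α b :=
      Finset.sum_sdiff (Finset.subset_univ B)
    rw [hBsum, hsum α hα] at hsplit
    have hzero : ∑ b ∈ Finset.univ \ B, F α b = 0 := by omega
    exact (Finset.sum_eq_zero_iff.mp hzero) β (Finset.mem_sdiff.mpr ⟨Finset.mem_univ β, hβ⟩)
  -- identification of the complex product s s*
  have hX : ∀ u, u ∈ cprod A {s} {star s} ↔ u ∈ A.S ∧ A.c s (star s) u ≠ 0 := by
    intro u; simp [cprod]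
  have hXeq : cprod A {s} {star s} = (Finset.range p).image tp := by
    ext u
    rw [hX]
    constructor
    · rintro ⟨hu, hcu⟩
      obtain ⟨⟨a, b⟩, hab⟩ := A.nonempty_mem u hu
      obtain ⟨γ, hg1, hg2⟩ := c_pos_elim hs (star_mem hs) hu hab hcu
      have hg2' : (b, γ) ∈ s := mem_star.mp hg2
      have ha : a ∈ Δ := (Finset.mem_product.mp (hsub hg1)).1
      have hbB : b ∈ (Finset.range p).image fun k => ψ^[k] a := by
        by_contra hbB
        have h0 := hFzero a ha b hbB
        have hγB : γ ∈ (Finset.univ.filter fun γ => (a, γ) ∈ s ∧ (b, γ) ∈ s) := by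
          simp [hg1, hg2']
        have : (Finset.univ.filter fun γ => (a, γ) ∈ s ∧ (b, γ) ∈ s) = ∅ :=
          Finset.card_eq_zero.mp h0
        rw [this] at hγB
        simp at hγB
      obtain ⟨k, hk, hbe⟩ := Finset.mem_image.mp hbB
      have hmem : (a, b) ∈ tp k := by
        rw [← hbe]
        exact htpmem k a ha
      exact Finset.mem_image.mpr ⟨k, hk, rel_unique (htpthin k).1 hu hmem hab⟩
    · intro hu
      obtain ⟨k, hk, rfl⟩ := Finset.mem_image.mp hu
      refine ⟨(htpthin k).1, ?_⟩
      obtain ⟨α₀', hα₀'⟩ := hW.nonempty hp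
      obtain ⟨γ, hγ⟩ := dom_full hΔ hs hsub hα₀'
      exact c_pos_intro hs (star_mem hs) (htpthin k).1 (htpmem k α₀' hα₀')
        hγ (mem_star.mpr (hall k (Finset.mem_range.mp hk) _ _ hγ))
  -- regularity of s, contradiction
  have hY : ∀ u, u ∈ cprod A ((Finset.range p).image tp) {s} ↔
      u ∈ A.S ∧ ∃ k < p, A.c (tp k) s u ≠ 0 := by
    intro u
    simp only [cprod, Finset.mem_filter, Finset.mem_singleton, Finset.mem_image,
      Finset.mem_range, exists_eq_left]
    constructor
    · rintro ⟨hu, t', ⟨k, hk, rfl⟩, hct⟩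
      exact ⟨hu, k, hk, hct⟩
    · rintro ⟨hu, k, hk, hct⟩
      exact ⟨hu, tp k, ⟨k, hk, rfl⟩, hct⟩
  apply hnreg
  unfold Regular
  rw [hXeq]
  apply Finset.eq_singleton_iff_unique_mem.mpr
  constructor
  · rw [hY]
    refine ⟨hs, 0, hp.pos, ?_⟩
    obtain ⟨⟨a, b⟩, hab⟩ := A.nonempty_mem s hs
    have ha : a ∈ Δ := (Finset.mem_product.mp (hsub hab)).1
    have h0 : (a, a) ∈ tp 0 := by simpa using htpmem 0 a ha
    exact c_pos_intro (htpthin 0).1 hs hs hab h0 hab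
  · intro u hu
    rw [hY] at hu
    obtain ⟨hu, k, hk, hct⟩ := hu
    obtain ⟨⟨a, b⟩, hab⟩ := A.nonempty_mem u hu
    obtain ⟨β, hb1, hb2⟩ := c_pos_elim (htpthin k).1 hs hu hab hct
    have ha : a ∈ Δ := (Finset.mem_product.mp ((htpthin k).2.1 hb1)).1
    have hβ : β = ψ^[k] a := val1_unique (htpthin k).2.2 hb1 (htpmem k a ha)
    rw [hβ] at hb2
    have habs : (a, b) ∈ s := by
      rcases Nat.eq_zero_or_pos k with rfl | hk0
      · simpa using hb2
      · have h2 := hall (p - k) (by omega) _ _ hb2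
        rw [← Function.iterate_add_apply, show p - k + k = p by omega, hψper a ha] at h2
        exact h2
    exact rel_unique hu hs hab habs

/-- the intersection number of `s s*` on the diagonal is `p`. -/
lemma cA (hp : p.Prime) (hW : WreathFiber p A Δ)
    (hs : s ∈ A.S) (hsub : s ⊆ Δ ×ˢ Γ) (hval : HasValency s p) :
    A.c s (star s) (diagRel Δ) = p := by
  obtain ⟨α, hα⟩ := hW.nonempty hp
  rw [← count_eq hs (star_mem hs) hW.fiber (diag_self hα)]
  have h3 : (Finset.univ.filter fun γ => (α, γ) ∈ s ∧ (γ, α) ∈ star s)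
      = Finset.univ.filter fun γ => (α, γ) ∈ s := by
    ext γ; simp [mem_star]
  rw [h3]
  obtain ⟨γ', hγ'⟩ := dom_full hW.fiber hs hsub hα
  exact outdeg_eq hval hγ'

/-- relations not inside `Δ ×ˢ Δ` do not occur in `s s*`. -/
lemma cD (hΔ : IsFiber A Δ) (hs : s ∈ A.S) (hsub : s ⊆ Δ ×ˢ Γ)
    {u : Finset (Ω × Ω)} (hu : u ∈ A.S) (hns : ¬ u ⊆ Δ ×ˢ Δ) :
    A.c s (star s) u = 0 := by
  by_contra h
  obtain ⟨⟨a, b⟩, hab⟩ := A.nonempty_mem u hu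
  obtain ⟨γ, hg1, hg2⟩ := c_pos_elim hs (star_mem hs) hu hab h
  have ha : a ∈ Δ := (Finset.mem_product.mp (hsub hg1)).1
  have hb : b ∈ Δ := (Finset.mem_product.mp (hsub (mem_star.mp hg2))).1
  exact hns (rel_subset_product hΔ hΔ hu hab ha hb)

/-- there are exactly `p - 1` non-thin basis relations on the fiber `Δ`. -/
lemma nonthin_count (hp : p.Prime) (hW : WreathFiber p A Δ) :
    (A.S.filter fun w => w ⊆ Δ ×ˢ Δ ∧ ¬ HasValency w 1).card = p - 1 := by
  classical
  have hΔ := hW.fiber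
  set SΔ := A.S.filter (fun w => w ⊆ Δ ×ˢ Δ) with hSΔ
  have hcover : Δ ×ˢ Δ = SΔ.biUnion id := by
    apply Finset.Subset.antisymm
    · intro x hx
      obtain ⟨w, hw, hxw⟩ := relOf_exists A x
      have h1 : x.1 ∈ Δ := (Finset.mem_product.mp hx).1
      have h2 : x.2 ∈ Δ := (Finset.mem_product.mp hx).2
      have hsubw : w ⊆ Δ ×ˢ Δ :=
        rel_subset_product hΔ hΔ hw (show (x.1, x.2) ∈ w by simpa using hxw) h1 h2
      exact Finset.mem_biUnion.mpr ⟨w, Finset.mem_filter.mpr ⟨hw, hsubw⟩, hxw⟩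
    · intro x hx
      obtain ⟨w, hw, hxw⟩ := Finset.mem_biUnion.mp hx
      exact (Finset.mem_filter.mp hw).2 hxw
  have hdisj : ∀ w₁ ∈ SΔ, ∀ w₂ ∈ SΔ, w₁ ≠ w₂ → Disjoint (id w₁) (id w₂) := by
    intro w₁ h1 w₂ h2 hne12
    rw [Finset.disjoint_left]
    intro x hx1 hx2
    exact hne12 (rel_unique (Finset.mem_filter.mp h1).1 (Finset.mem_filter.mp h2).1 hx1 hx2)
  have hcard : (Δ ×ˢ Δ).card = ∑ w ∈ SΔ, w.card := by
    rw [hcover, Finset.card_biUnion hdisj]; rfl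
  rw [Finset.card_product, hW.degree] at hcard
  have hsplit : (∑ w ∈ SΔ.filter (fun w => HasValency w 1), w.card)
      + ∑ w ∈ SΔ.filter (fun w => ¬ HasValency w 1), w.card = ∑ w ∈ SΔ, w.card :=
    Finset.sum_filter_add_sum_filter_not _ _ _
  have hthinsum : ∑ w ∈ SΔ.filter (fun w => HasValency w 1), w.card = p * p ^ 2 := by
    have heq : SΔ.filter (fun w => HasValency w 1) = A.S.filter fun w => IsThinOn A Δ w := by
      ext w
      simp only [hSΔ, Finset.filter_filter, Finset.mem_filter]
      simp only [IsThinOn]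
      tauto
    rw [heq]
    have hc : ∀ w ∈ A.S.filter (fun w => IsThinOn A Δ w), w.card = p ^ 2 := by
      intro w hw
      have hthin := (Finset.mem_filter.mp hw).2
      have := card_rel hΔ hthin.1 hthin.2.1 hthin.2.2
      rw [this, one_mul, hW.degree]
    rw [Finset.sum_congr rfl hc, Finset.sum_const, hW.thins, smul_eq_mul]
  have hNsum : ∑ w ∈ SΔ.filter (fun w => ¬ HasValency w 1), w.card
      = (SΔ.filter (fun w => ¬ HasValency w 1)).card * (p * p ^ 2) := by
    have hc : ∀ w ∈ SΔ.filter (fun w => ¬ HasValency w 1), w.card = p * p ^ 2 := by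
      intro w hw
      obtain ⟨hwS, hwnv⟩ := Finset.mem_filter.mp hw
      obtain ⟨hwS', hwsub⟩ := Finset.mem_filter.mp hwS
      rcases hW.dichot w hwS' hwsub with h | h
      · exact absurd h hwnv
      · rw [card_rel hΔ hwS' hwsub h, hW.degree]
    rw [Finset.sum_congr rfl hc, Finset.sum_const, smul_eq_mul]
  have heqN : SΔ.filter (fun w => ¬ HasValency w 1)
      = A.S.filter fun w => w ⊆ Δ ×ˢ Δ ∧ ¬ HasValency w 1 := by
    ext w
    simp only [hSΔ, Finset.filter_filter, Finset.mem_filter]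
  rw [← hsplit, hthinsum, hNsum] at hcard
  have hppos : 0 < p ^ 2 * p := by have := hp.pos; positivity
  rw [← heqN]
  set n := (SΔ.filter fun w => ¬ HasValency w 1).card with hn
  have h3 : (p ^ 2 * p) * p = (p ^ 2 * p) * (1 + n) := by
    calc (p ^ 2 * p) * p = p ^ 2 * p ^ 2 := by ring
    _ = p * p ^ 2 + n * (p * p ^ 2) := hcard
    _ = (p ^ 2 * p) * (1 + n) := by ring
  have h2 : p = 1 + n := Nat.eq_of_mul_eq_mul_left hppos h3
  omega

noncomputable def relOf (A : CoherentConfig Ω) (x : Ω × Ω) : Finset (Ω × Ω) :=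
  (relOf_exists A x).choose

lemma relOf_mem_S (A : CoherentConfig Ω) (x : Ω × Ω) : relOf A x ∈ A.S :=
  (relOf_exists A x).choose_spec.1

lemma relOf_mem (A : CoherentConfig Ω) (x : Ω × Ω) : x ∈ relOf A x :=
  (relOf_exists A x).choose_spec.2

lemma relOf_eq {u : Finset (Ω × Ω)} {x : Ω × Ω} (hu : u ∈ A.S) (hx : x ∈ u) :
    relOf A x = u :=
  rel_unique (relOf_mem_S A x) hu (relOf_mem A x) hx

/-- every non-thin relation on `Δ` appears in `s s*` with coefficient 1. -/
lemma cC (hp : p.Prime) (hW : WreathFiber p A Δ)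
    (hs : s ∈ A.S) (hsub : s ⊆ Δ ×ˢ Γ) (hval : HasValency s p)
    (hsval : HasValency (star s) p) (hnreg : ¬ Regular A s)
    {u : Finset (Ω × Ω)} (hu : u ∈ A.S) (husub : u ⊆ Δ ×ˢ Δ) (hnv1 : ¬ HasValency u 1) :
    A.c s (star s) u = 1 := by
  classical
  have hΔ := hW.fiber
  have hB : ∀ t : Finset (Ω × Ω), IsThinOn A Δ t → t ≠ diagRel Δ → A.c s (star s) t = 0 :=
    fun t ht htd => cB hp hW hs hsub hval hsval hnreg ht htd
  obtain ⟨ψ, tp, hψmaps, hψinj, hψper, hψnop, htpthin, htpmem, htpcomp⟩ := psi_pack hp hW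
  have hC1 : ∀ (γ β β' : Ω), (β, γ) ∈ s → (β', γ) ∈ s → β ≠ β' →
      ∀ t, IsThinOn A Δ t → (β, β') ∈ t → False := by
    intro γ β β' h1 h2 hne t ht hmem
    have htd : t ≠ diagRel Δ := by
      rintro rfl
      exact hne ((memDiag.mp hmem).2).symm
    exact (c_pos_intro hs (star_mem hs) ht.1 hmem h1 (mem_star.mpr h2)) (hB t ht htd)
  set N := A.S.filter (fun w => w ⊆ Δ ×ˢ Δ ∧ ¬ HasValency w 1) with hN
  have huN : u ∈ N := Finset.mem_filter.mpr ⟨hu, husub, hnv1⟩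
  have hNcard : N.card = p - 1 := nonthin_count hp hW
  set M : Finset (Ω × Ω) → Finset (Ω × Ω) := fun w => w.image (fun x => (x.1, ψ x.2)) with hM
  have hψ1 : ∀ α ∈ Δ, ψ α ∈ Δ := by
    intro α hα; have := hψmaps 1 α hα; simpa using this
  have hψ1inj : ∀ α ∈ Δ, ∀ β ∈ Δ, ψ α = ψ β → α = β := by
    intro α hα β hβ h
    exact hψinj 1 α hα β hβ (by simpa using h)
  have ht1mem : ∀ α ∈ Δ, (α, ψ α) ∈ tp 1 := by
    intro α hα; have := htpmem 1 α hα; simpa using this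
  -- M maps N into N
  have hMmem : ∀ w ∈ N, M w ∈ N := by
    intro w hwN
    obtain ⟨hwS, hwsub, hwnv⟩ := Finset.mem_filter.mp hwN
    obtain ⟨⟨a₀, b₀⟩, hab₀⟩ := A.nonempty_mem w hwS
    have hb₀ : b₀ ∈ Δ := (Finset.mem_product.mp (hwsub hab₀)).2
    have ha₀ : a₀ ∈ Δ := (Finset.mem_product.mp (hwsub hab₀)).1
    obtain ⟨wr, hwrS, hwrx⟩ := relOf_exists A (a₀, ψ b₀)
    have hcw : A.c w (tp 1) wr ≠ 0 :=
      c_pos_intro hwS (htpthin 1).1 hwrS hwrx hab₀ (ht1mem b₀ hb₀)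
    have hwrsub : wr ⊆ M w := by
      intro x hx
      obtain ⟨β, hb1, hb2⟩ := c_pos_elim hwS (htpthin 1).1 hwrS
        (show (x.1, x.2) ∈ wr by simpa using hx) hcw
      have hβΔ : β ∈ Δ := (Finset.mem_product.mp (hwsub hb1)).2
      have hx2 : x.2 = ψ β := val1_unique (htpthin 1).2.2 hb2 (ht1mem β hβΔ)
      apply Finset.mem_image.mpr ⟨(x.1, β), hb1, ?_⟩
      rw [← hx2]
    have hMsub : M w ⊆ Δ ×ˢ Δ := by
      intro x hx
      obtain ⟨⟨a, b⟩, hab, rfl⟩ := Finset.mem_image.mp hx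
      have h2 := Finset.mem_product.mp (hwsub hab)
      exact Finset.mem_product.mpr ⟨h2.1, hψ1 b h2.2⟩
    have hwrsubΔ : wr ⊆ Δ ×ˢ Δ := Finset.Subset.trans hwrsub hMsub
    have hwrnv : ¬ HasValency wr 1 := by
      intro hv1
      have hwrthin : IsThinOn A Δ wr := ⟨hwrS, hwrsubΔ, hv1⟩
      obtain ⟨t'', ht'', hspec⟩ := thin_comp hp hW hwrthin (thin_star' hp hW (htpthin 1))
      have h1 : phi wr a₀ = ψ b₀ := phi_eq hv1 hwrx
      have h2 : phi (star (tp 1)) (ψ b₀) = b₀ :=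
        phi_eq (thin_star' hp hW (htpthin 1)).2.2 (mem_star.mpr (ht1mem b₀ hb₀))
      have h3 := hspec a₀ ha₀
      rw [h1, h2] at h3
      have h4 : w = t'' := rel_unique hwS ht''.1 hab₀ h3
      exact hwnv (h4 ▸ ht''.2.2)
    have hwrval : HasValency wr p := by
      rcases hW.dichot wr hwrS hwrsubΔ with h | h
      · exact absurd h hwrnv
      · exact h
    have hwval : HasValency w p := by
      rcases hW.dichot w hwS hwsub with h | h
      · exact absurd h hwnv
      · exact h
    have hMcard : (M w).card = w.card := by
      apply Finset.card_image_of_injOn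
      intro x hx y hy he
      have hx2 : x.2 ∈ Δ := (Finset.mem_product.mp (hwsub hx)).2
      have hy2 : y.2 ∈ Δ := (Finset.mem_product.mp (hwsub hy)).2
      have he' : (x.1, ψ x.2) = (y.1, ψ y.2) := he
      simp only [Prod.mk.injEq] at he'
      exact Prod.ext he'.1 (hψ1inj _ hx2 _ hy2 he'.2)
    have hwr : wr = M w := by
      apply Finset.eq_of_subset_of_card_le hwrsub
      rw [hMcard, card_rel hΔ hwS hwsub hwval, ← card_rel hΔ hwrS hwrsubΔ hwrval]
    exact Finset.mem_filter.mpr ⟨hwr ▸ hwrS, hMsub, hwr ▸ hwrnv⟩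
  -- iterating M is composing with iterates of ψ
  have hMiter : ∀ (k : ℕ) (w : Finset (Ω × Ω)),
      M^[k] w = w.image (fun x => (x.1, ψ^[k] x.2)) := by
    intro k
    induction k with
    | zero =>
      intro w
      simp only [Function.iterate_zero, id_eq]
      rw [show (fun x : Ω × Ω => (x.1, x.2)) = id from funext fun x => rfl, Finset.image_id]
    | succ n ih =>
      intro w
      rw [Function.iterate_succ_apply', ih]
      simp only [hM]
      rw [Finset.image_image]
      apply Finset.image_congr
      intro x hx
      simp [Function.iterate_succ_apply']
  have hMper : ∀ w ∈ N, M^[p] w = w := by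
    intro w hwN
    obtain ⟨hwS, hwsub, -⟩ := Finset.mem_filter.mp hwN
    rw [hMiter]
    have hcongr : ∀ x ∈ w, (fun x : Ω × Ω => (x.1, ψ^[p] x.2)) x = id x := by
      rintro ⟨x1, x2⟩ hx
      have hx2 : x2 ∈ Δ := (Finset.mem_product.mp (hwsub hx)).2
      simp [hψper x2 hx2]
    rw [Finset.image_congr hcongr, Finset.image_id]
  have hMfix : ∀ w ∈ N, M w = w :=
    prime_fix hp N M hMmem hMper (by rw [hNcard]; have := hp.pos; omega)
  have hstable : ∀ w ∈ N, ∀ x : Ω × Ω, x ∈ w → ∀ k, (x.1, ψ^[k] x.2) ∈ w := by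
    intro w hwN x hx k
    induction k with
    | zero => simpa using hx
    | succ n ih =>
      have h1 : (x.1, ψ (ψ^[n] x.2)) ∈ M w :=
        Finset.mem_image.mpr ⟨(x.1, ψ^[n] x.2), ih, rfl⟩
      rw [hMfix w hwN] at h1
      rw [Function.iterate_succ_apply']
      exact h1
  -- orbits of ψ and the covering property
  have horb : ∀ β ∈ Δ, ((Finset.range p).image fun k => ψ^[k] β).card = p := by
    intro β hβ
    rw [Finset.card_image_of_injOn, Finset.card_range]
    have hdist := iter_distinct (f := ψ) (x := β) (hψper β hβ)
      (fun d h1 h2 => hψnop d h1 h2 β hβ)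
    intro i hi j hj he
    simp only [Finset.coe_range, Set.mem_Iio] at hi hj
    rcases lt_trichotomy i j with h | h | h
    · exact absurd he (hdist i j h hj)
    · exact h
    · exact absurd he.symm (hdist j i h hi)
  have hrelorb : ∀ β ∈ Δ, ∀ β' ∈ Δ, β ≠ β' →
      ∀ z, z ∈ ((Finset.range p).image fun k => ψ^[k] β) →
        z ∈ ((Finset.range p).image fun k => ψ^[k] β') →
      ∃ t, IsThinOn A Δ t ∧ (β, β') ∈ t := by
    intro β hβ β' hβ' hnee z hz1 hz2
    obtain ⟨i, hi, hei⟩ := Finset.mem_image.mp hz1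
    obtain ⟨j, hj, hej⟩ := Finset.mem_image.mp hz2
    rw [Finset.mem_range] at hi hj
    have h1 : ψ^[p - j] (ψ^[j] β') = β' := by
      rw [← Function.iterate_add_apply, show p - j + j = p by omega, hψper β' hβ']
    have h2 : ψ^[p - j + i] β = β' := by
      rw [Function.iterate_add_apply, hei, ← hej, h1]
    have h3 : ψ^[(p - j + i) % p] β = β' := by
      rw [← iter_mod hp.pos (hψper β hβ)]
      exact h2
    have hr0 : (p - j + i) % p ≠ 0 := by
      intro h
      rw [h] at h3
      simp at h3
      exact hnee h3
    exact ⟨tp ((p - j + i) % p), htpthin _, by rw [← h3]; exact htpmem _ β hβ⟩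
  have hcov : ∀ (γ α₁ : Ω), (α₁, γ) ∈ s →
      ((Finset.univ.filter fun β => (β, γ) ∈ s).biUnion
        fun β => (Finset.range p).image fun k => ψ^[k] β) = Δ := by
    intro γ α₁ hγ
    set Sγ := Finset.univ.filter fun β => (β, γ) ∈ s with hSγ
    have hSγsub : ∀ β ∈ Sγ, β ∈ Δ := fun β hβ =>
      (Finset.mem_product.mp (hsub (Finset.mem_filter.mp hβ).2)).1
    have hSγcard : Sγ.card = p := by
      have h2 : (Finset.univ.filter fun β => (γ, β) ∈ star s).card = p :=
        outdeg_eq hsval (mem_star.mpr hγ)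
      rw [hSγ, ← h2]
      congr 1
      ext β; simp [mem_star]
    have hdisj : ∀ β₁ ∈ Sγ, ∀ β₂ ∈ Sγ, β₁ ≠ β₂ →
        Disjoint ((Finset.range p).image fun k => ψ^[k] β₁)
          ((Finset.range p).image fun k => ψ^[k] β₂) := by
      intro β₁ h1 β₂ h2 hne12
      rw [Finset.disjoint_left]
      intro z hz1 hz2
      obtain ⟨t, ht, htmem⟩ := hrelorb β₁ (hSγsub _ h1) β₂ (hSγsub _ h2) hne12 z hz1 hz2
      exact hC1 γ β₁ β₂ (Finset.mem_filter.mp h1).2 (Finset.mem_filter.mp h2).2 hne12 t ht htmem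
    have hcard : (Sγ.biUnion fun β => (Finset.range p).image fun k => ψ^[k] β).card = p * p := by
      rw [Finset.card_biUnion hdisj]
      rw [Finset.sum_congr rfl (fun β hβ => horb β (hSγsub β hβ)), Finset.sum_const,
        hSγcard, smul_eq_mul]
    apply Finset.eq_of_subset_of_card_le
    · intro z hz
      obtain ⟨β, hβ, hβ2⟩ := Finset.mem_biUnion.mp hz
      obtain ⟨k, -, rfl⟩ := Finset.mem_image.mp hβ2
      exact hψmaps k β (hSγsub β hβ)
    · rw [hcard, hW.degree, pow_two]
  -- lower bound: every non-thin relation occurs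
  obtain ⟨α₁, hα₁⟩ := hW.nonempty hp
  have hge1 : ∀ w ∈ N, 1 ≤ A.c s (star s) w := by
    intro w hwN
    obtain ⟨hwS, hwsub, hwnv⟩ := Finset.mem_filter.mp hwN
    obtain ⟨γ, hγ⟩ := dom_full hΔ hs hsub hα₁
    obtain ⟨β₀, hβ₀⟩ := dom_full hΔ hwS hwsub hα₁
    have hβ₀Δ : β₀ ∈ Δ := (Finset.mem_product.mp (hwsub hβ₀)).2
    have hcover := hcov γ α₁ hγ
    have hβ₀cov : β₀ ∈ ((Finset.univ.filter fun β => (β, γ) ∈ s).biUnion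
        fun β => (Finset.range p).image fun k => ψ^[k] β) := by
      rw [hcover]; exact hβ₀Δ
    obtain ⟨β', hβ'Sγ, hβ'orb⟩ := Finset.mem_biUnion.mp hβ₀cov
    obtain ⟨k, hk, hke⟩ := Finset.mem_image.mp hβ'orb
    rw [Finset.mem_range] at hk
    have hβ'Δ : β' ∈ Δ :=
      (Finset.mem_product.mp (hsub (Finset.mem_filter.mp hβ'Sγ).2)).1
    have h5 : ψ^[p - k] β₀ = β' := by
      rw [← hke, ← Function.iterate_add_apply, show p - k + k = p by omega, hψper β' hβ'Δ]
    have h6 : (α₁, β') ∈ w := by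
      have h7 := hstable w hwN (α₁, β₀) hβ₀ (p - k)
      rw [show ((α₁, β₀) : Ω × Ω).2 = β₀ from rfl, h5] at h7
      exact h7
    have hβ'γ : (β', γ) ∈ s := (Finset.mem_filter.mp hβ'Sγ).2
    have h8 := c_pos_intro hs (star_mem hs) hwS h6 hγ (mem_star.mpr hβ'γ)
    omega
  -- the fiberwise decomposition of the total sum
  have hfibeq : ∀ w ∈ A.S, Finset.univ.filter (fun β => relOf A (α₁, β) = w)
      = Finset.univ.filter (fun β => (α₁, β) ∈ w) := by
    intro w hw
    ext β
    simp only [Finset.mem_filter, Finset.mem_univ, true_and]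
    constructor
    · rintro rfl; exact relOf_mem A _
    · intro h; exact relOf_eq hw h
  have hFc : ∀ w ∈ A.S, ∀ β : Ω, (α₁, β) ∈ w →
      (Finset.univ.filter fun γ => (α₁, γ) ∈ s ∧ (β, γ) ∈ s).card = A.c s (star s) w := by
    intro w hw β hβ
    rw [← count_eq hs (star_mem hs) hw hβ]
    congr 1
    ext γ; simp [mem_star]
  have hfib : ∑ w ∈ A.S, ∑ β ∈ Finset.univ.filter (fun β => relOf A (α₁, β) = w),
      (Finset.univ.filter fun γ => (α₁, γ) ∈ s ∧ (β, γ) ∈ s).card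
      = ∑ β : Ω, (Finset.univ.filter fun γ => (α₁, γ) ∈ s ∧ (β, γ) ∈ s).card :=
    Finset.sum_fiberwise_of_maps_to (fun β _ => relOf_mem_S A (α₁, β)) _
  have hinner : ∀ w ∈ A.S, (∑ β ∈ Finset.univ.filter (fun β => relOf A (α₁, β) = w),
      (Finset.univ.filter fun γ => (α₁, γ) ∈ s ∧ (β, γ) ∈ s).card)
      = (if w = diagRel Δ then p else if w ∈ N then p * A.c s (star s) w else 0) := by
    intro w hw
    rw [hfibeq w hw,
      Finset.sum_congr rfl (fun β hβ => hFc w hw β (Finset.mem_filter.mp hβ).2),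
      Finset.sum_const, smul_eq_mul]
    by_cases hdg : w = diagRel Δ
    · subst hdg
      rw [if_pos rfl]
      have h1 : (Finset.univ.filter fun β => (α₁, β) ∈ diagRel Δ) = {α₁} := by
        ext β; simp [memDiag, hα₁]
      rw [h1, Finset.card_singleton, one_mul, cA hp hW hs hsub hval]
    · rw [if_neg hdg]
      by_cases hwN2 : w ∈ N
      · rw [if_pos hwN2]
        obtain ⟨hwS, hwsubΔ, hwnv⟩ := Finset.mem_filter.mp hwN2
        have hwv : HasValency w p := by
          rcases hW.dichot w hwS hwsubΔ with h | h
          · exact absurd h hwnv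
          · exact h
        obtain ⟨β₀, hβ₀⟩ := dom_full hΔ hwS hwsubΔ hα₁
        rw [outdeg_eq hwv hβ₀]
      · rw [if_neg hwN2]
        by_cases hws : w ⊆ Δ ×ˢ Δ
        · have hv1 : HasValency w 1 := by
            by_contra h
            exact hwN2 (Finset.mem_filter.mpr ⟨hw, hws, h⟩)
          rw [hB w ⟨hw, hws, hv1⟩ hdg, mul_zero]
        · rw [cD hΔ hs hsub hw hws, mul_zero]
  have hsum1 := sum_F (Γ := Γ) hΔ hs hsub hval hsval hα₁
  rw [← hfib, Finset.sum_congr rfl hinner] at hsum1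
  -- evaluate the ite-sum
  have hdiagS : diagRel Δ ∈ A.S := hΔ
  rw [← Finset.add_sum_erase _ _ hdiagS, if_pos rfl] at hsum1
  have hstep2 : ∑ w ∈ A.S.erase (diagRel Δ),
      (if w = diagRel Δ then p else if w ∈ N then p * A.c s (star s) w else 0)
      = ∑ w ∈ N, p * A.c s (star s) w := by
    rw [Finset.sum_congr rfl (g := fun w => if w ∈ N then p * A.c s (star s) w else 0)
      (fun w hw => by rw [if_neg (Finset.ne_of_mem_erase hw)])]
    rw [← Finset.sum_filter]
    congr 1
    ext w
    simp only [Finset.mem_filter, Finset.mem_erase]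
    constructor
    · rintro ⟨-, h⟩; exact h
    · intro h
      refine ⟨⟨?_, (Finset.mem_filter.mp h).1⟩, h⟩
      rintro rfl
      exact (Finset.mem_filter.mp h).2.2 (thin_diag hΔ).2.2
  rw [hstep2, ← Finset.mul_sum] at hsum1
  -- hsum1 : p + p * Σ = p * p
  have hfin : ∑ w ∈ N, A.c s (star s) w = p - 1 := by
    have hppos := hp.pos
    have h9 : p * (1 + ∑ w ∈ N, A.c s (star s) w) = p * p := by
      rw [Nat.mul_add, mul_one]
      exact hsum1
    have := Nat.eq_of_mul_eq_mul_left hppos h9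
    omega
  have h1 : A.c s (star s) u + ∑ w ∈ N.erase u, A.c s (star s) w = p - 1 := by
    rw [Finset.add_sum_erase _ _ huN]
    exact hfin
  have h2 : (N.erase u).card ≤ ∑ w ∈ N.erase u, A.c s (star s) w := by
    calc (N.erase u).card = ∑ _w ∈ N.erase u, 1 := by simp
    _ ≤ ∑ w ∈ N.erase u, A.c s (star s) w :=
        Finset.sum_le_sum (fun w hw => hge1 w (Finset.mem_of_mem_erase hw))
  have h3 : (N.erase u).card = p - 2 := by
    rw [Finset.card_erase_of_mem huN, hNcard]
    omega
  have h4 := hge1 u huN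
  have hp2 := hp.two_le
  omega

end MainB

section Final

variable {Ω : Type} [Fintype Ω] [DecidableEq Ω]

theorem stmt12' (p : ℕ) (hp : p.Prime) (A : CoherentConfig Ω)
    (hfib : ∀ Δ : Finset Ω, IsFiber A Δ → WreathFiber p A Δ)
    (hinter : ∀ u ∈ A.S, ∀ Δ Γ : Finset Ω, IsFiber A Δ → IsFiber A Γ → Δ ≠ Γ →
      u ⊆ Δ ×ˢ Γ → HasValency u p)
    (Δ Γ : Finset Ω) (hΔ : IsFiber A Δ) (hΓ : IsFiber A Γ) (hne : Δ ≠ Γ)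
    (s : Finset (Ω × Ω)) (hs : s ∈ A.S) (hsub : s ⊆ Δ ×ˢ Γ)
    (hnreg : ¬ Regular A s) (hval : HasValency s p) :
    adjM s * adjM (star s) =
      (p : ℂ) • adjM (diagRel Δ) +
        ∑ u ∈ A.S.filter (fun u => u ⊆ Δ ×ˢ Δ ∧ ¬ HasValency u 1), adjM u ∧
    cprod A {s} {star s} =
      insert (diagRel Δ) (A.S.filter (fun u => u ⊆ Δ ×ˢ Δ ∧ ¬ HasValency u 1)) := by
  classical
  have hW := hfib Δ hΔ
  have hsval : HasValency (star s) p :=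
    hinter (star s) (star_mem hs) Γ Δ hΓ hΔ (Ne.symm hne) (star_subset_swap hsub)
  have hcA : A.c s (star s) (diagRel Δ) = p := cA hp hW hs hsub hval
  have hcB : ∀ t : Finset (Ω × Ω), IsThinOn A Δ t → t ≠ diagRel Δ →
      A.c s (star s) t = 0 :=
    fun t ht htd => cB hp hW hs hsub hval hsval hnreg ht htd
  have hcC : ∀ u : Finset (Ω × Ω), u ∈ A.S → u ⊆ Δ ×ˢ Δ → ¬ HasValency u 1 →
      A.c s (star s) u = 1 :=
    fun u hu husub hnv1 => cC hp hW hs hsub hval hsval hnreg hu husub hnv1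
  have hcD : ∀ u : Finset (Ω × Ω), u ∈ A.S → ¬ u ⊆ Δ ×ˢ Δ → A.c s (star s) u = 0 :=
    fun u hu hns => cD hΔ hs hsub hu hns
  set N := A.S.filter (fun u => u ⊆ Δ ×ˢ Δ ∧ ¬ HasValency u 1) with hN
  have hdiagN : diagRel Δ ∉ N := by
    intro h
    exact (Finset.mem_filter.mp h).2.2 (thin_diag hΔ).2.2
  constructor
  · -- the matrix identity
    ext α β
    rw [Matrix.mul_apply, Matrix.add_apply, Matrix.smul_apply, Matrix.sum_apply]
    set K := (Finset.univ.filter fun γ => (α, γ) ∈ s ∧ (β, γ) ∈ s).card with hK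
    have hL : (∑ γ, adjM s α γ * adjM (star s) γ β) = (K : ℂ) := by
      rw [hK, Finset.card_filter, Nat.cast_sum]
      apply Finset.sum_congr rfl
      intro γ _
      by_cases h1 : (α, γ) ∈ s <;> by_cases h2 : (β, γ) ∈ s <;>
        simp [adjM, h1, h2, mem_star]
    rw [hL]
    have hKc : ∀ w ∈ A.S, (α, β) ∈ w → K = A.c s (star s) w := by
      intro w hw hβw
      rw [hK, ← count_eq hs (star_mem hs) hw hβw]
      congr 1
      ext γ; simp [mem_star]
    have hadj : ∀ u : Finset (Ω × Ω), adjM u α β = if (α, β) ∈ u then 1 else 0 := fun u => rfl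
    by_cases hdg : (α, β) ∈ diagRel Δ
    · have hKp : K = p := by
        rw [hKc (diagRel Δ) hΔ hdg, hcA]
      have hzero : (∑ u ∈ N, adjM u α β) = 0 := by
        apply Finset.sum_eq_zero
        intro u huN
        rw [hadj, if_neg]
        intro hmem
        exact hdiagN (rel_unique (Finset.mem_filter.mp huN).1 hΔ hmem hdg ▸ huN)
      rw [hzero, hKp, hadj, if_pos hdg]
      simp [smul_eq_mul]
    · by_cases hex : ∃ u ∈ N, (α, β) ∈ u
      · obtain ⟨u, huN, hmem⟩ := hex
        obtain ⟨huS, husub, hunv⟩ := Finset.mem_filter.mp huN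
        have hK1 : K = 1 := by rw [hKc u huS hmem, hcC u huS husub hunv]
        have hone : (∑ u' ∈ N, adjM u' α β) = 1 := by
          rw [Finset.sum_eq_single u]
          · rw [hadj, if_pos hmem]
          · intro u' hu'N hu'ne
            rw [hadj, if_neg]
            intro hmem'
            exact hu'ne (rel_unique (Finset.mem_filter.mp hu'N).1 huS hmem' hmem)
          · intro h; exact absurd huN h
        rw [hone, hK1, hadj, if_neg hdg]
        simp [smul_eq_mul]
      · have hK0 : K = 0 := by
          by_contra hK0
          obtain ⟨γ, hγ⟩ := Finset.card_ne_zero.mp (hK ▸ hK0)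
          obtain ⟨-, hγ1, hγ2⟩ := Finset.mem_filter.mp hγ
          have hα : α ∈ Δ := (Finset.mem_product.mp (hsub hγ1)).1
          have hβ : β ∈ Δ := (Finset.mem_product.mp (hsub hγ2)).1
          set w := relOf A (α, β) with hw
          have hwS : w ∈ A.S := relOf_mem_S A _
          have hwmem : (α, β) ∈ w := relOf_mem A _
          have hwsub : w ⊆ Δ ×ˢ Δ := rel_subset_product hΔ hΔ hwS hwmem hα hβ
          by_cases hv1 : HasValency w 1
          · have hwd : w ≠ diagRel Δ := by
              rintro h
              exact hdg (h ▸ hwmem)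
            exact hK0 (by rw [hKc w hwS hwmem, hcB w ⟨hwS, hwsub, hv1⟩ hwd])
          · exact hex ⟨w, Finset.mem_filter.mpr ⟨hwS, hwsub, hv1⟩, hwmem⟩
        have hzero : (∑ u ∈ N, adjM u α β) = 0 := by
          apply Finset.sum_eq_zero
          intro u huN
          rw [hadj, if_neg]
          intro hmem
          exact hex ⟨u, huN, hmem⟩
        rw [hzero, hK0, hadj, if_neg hdg]
        simp [smul_eq_mul]
  · -- the complex product identity
    ext u
    have hXm : u ∈ cprod A {s} {star s} ↔ u ∈ A.S ∧ A.c s (star s) u ≠ 0 := by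
      simp [cprod]
    rw [hXm, Finset.mem_insert]
    constructor
    · rintro ⟨hu, hcu⟩
      by_cases hus : u ⊆ Δ ×ˢ Δ
      · by_cases hv1 : HasValency u 1
        · left
          by_contra hdn
          exact hcu (hcB u ⟨hu, hus, hv1⟩ hdn)
        · right
          exact Finset.mem_filter.mpr ⟨hu, hus, hv1⟩
      · exact absurd (hcD u hu hus) hcu
    · rintro (rfl | huN)
      · refine ⟨hΔ, ?_⟩
        rw [hcA]
        exact hp.pos.ne'
      · obtain ⟨hu, hus, hv1⟩ := Finset.mem_filter.mp huN
        refine ⟨hu, ?_⟩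
        rw [hcC u hu hus hv1]
        omega

end Final

theorem stmt12 (p : ℕ) (hp : p.Prime) (A : CoherentConfig Ω)
    (hfib : ∀ Δ : Finset Ω, IsFiber A Δ → WreathFiber p A Δ)
    (hinter : ∀ u ∈ A.S, ∀ Δ Γ : Finset Ω, IsFiber A Δ → IsFiber A Γ → Δ ≠ Γ →
      u ⊆ Δ ×ˢ Γ → HasValency u p)
    (Δ Γ : Finset Ω) (hΔ : IsFiber A Δ) (hΓ : IsFiber A Γ) (hne : Δ ≠ Γ)
    (s : Finset (Ω × Ω)) (hs : s ∈ A.S) (hsub : s ⊆ Δ ×ˢ Γ)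
    (hnreg : ¬ Regular A s) (hval : HasValency s p) :
    adjM s * adjM (star s) =
      (p : ℂ) • adjM (diagRel Δ) +
        ∑ u ∈ A.S.filter (fun u => u ⊆ Δ ×ˢ Δ ∧ ¬ HasValency u 1), adjM u ∧
    cprod A {s} {star s} =
      insert (diagRel Δ) (A.S.filter (fun u => u ⊆ Δ ×ˢ Δ ∧ ¬ HasValency u 1)) := by
  exact stmt12' p hp A hfib hinter Δ Γ hΔ hΓ hne s hs hsub hnreg hval
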